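/- Let E_0,…,E_n be disjoint sets of primes and let u, v ∈ (0,1/2)^{n+1} with 0 < ‖u − v‖₁ < 1. Then there is an absolute constant C > 0 such that |F(v)/F(u) − 1| ≤ C·‖u − v‖₁, where F(ρ) := ∏_{0≤j≤n} ∏_{p ∈ E_j} (1 + ρ_j/(p−1))·(1 − 1/p)^{ρ_j}. -/

import Mathlib

open Finset

noncomputable section

/-- `F(ρ) = ∏_j ∏_{p ∈ E_j} (1 + ρ_j/(p-1)) (1 - 1/p)^{ρ_j}`. -/
def Fprod {n : ℕ} (E : Fin (n + 1) → Set ℕ) (ρ : Fin (n + 1) → ℝ) : ℝ :=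
  ∏ j, ∏' p : E j,
    ((1 + ρ j / (((p : ℕ) : ℝ) - 1)) * (1 - 1 / ((p : ℕ) : ℝ)) ^ (ρ j))

namespace Stmt11Aux

/-- The log of a single Euler factor. -/
def L (p r : ℝ) : ℝ := Real.log (1 + r / (p - 1)) + r * Real.log (1 - 1 / p)

lemma log_factor {p r : ℝ} (hp : 2 ≤ p) (hr : 0 ≤ r) :
    Real.log ((1 + r / (p - 1)) * (1 - 1 / p) ^ r) = L p r := by
  have hp1 : (0:ℝ) < p - 1 := by linarith
  have h1 : (0:ℝ) < 1 + r / (p - 1) := by positivity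
  have h2 : (0:ℝ) < 1 - 1 / p := by
    have : 1 / p ≤ 1 / 2 := by
      apply one_div_le_one_div_of_le <;> linarith
    linarith
  rw [Real.log_mul (ne_of_gt h1) (by positivity), Real.log_rpow h2, L]

lemma log_one_sub_inv_ub {p : ℝ} (hp : 2 ≤ p) : Real.log (1 - 1 / p) ≤ -(1 / p) := by
  have hp0 : (0:ℝ) < p := by linarith
  have h2 : (0:ℝ) < 1 - 1 / p := by
    have : 1 / p ≤ 1 / 2 := by apply one_div_le_one_div_of_le <;> linarith
    linarith
  have := Real.log_le_sub_one_of_pos h2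
  linarith

lemma log_one_sub_inv_lb {p : ℝ} (hp : 2 ≤ p) : -(1 / (p - 1)) ≤ Real.log (1 - 1 / p) := by
  have hp0 : (0:ℝ) < p := by linarith
  have hp1 : (0:ℝ) < p - 1 := by linarith
  have h2 : (0:ℝ) < 1 - 1 / p := by
    have : 1 / p ≤ 1 / 2 := by apply one_div_le_one_div_of_le <;> linarith
    linarith
  have h := Real.one_sub_inv_le_log_of_pos h2
  have hbase : (1 - 1 / p) = (p - 1) / p := by field_simp
  rw [hbase, inv_div] at h
  have he : 1 - p / (p - 1) = -(1 / (p - 1)) := by field_simp; ring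
  rw [he] at h
  rw [hbase]
  exact h

/-- rewrite `1 + r/(p-1)` as a quotient. -/
lemma log_shift {p r : ℝ} (hp : 2 ≤ p) (hr : 0 ≤ r) :
    Real.log (1 + r / (p - 1)) = Real.log (p - 1 + r) - Real.log (p - 1) := by
  have hp1 : (0:ℝ) < p - 1 := by linarith
  have : 1 + r / (p - 1) = (p - 1 + r) / (p - 1) := by field_simp
  rw [this, Real.log_div (by positivity) (ne_of_gt hp1)]

/-- Key per-prime estimate, ordered version. -/
lemma key_le {p a b : ℝ} (hp : 2 ≤ p) (ha : 0 ≤ a) (hab : a ≤ b) (hb : b ≤ 1) :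
    |L p b - L p a| ≤ (b - a) / (p - 1) ^ 2 := by
  have hp1 : (1:ℝ) ≤ p - 1 := by linarith
  have hp1' : (0:ℝ) < p - 1 := by linarith
  have hA : (0:ℝ) < p - 1 + a := by linarith
  have hB : (0:ℝ) < p - 1 + b := by linarith
  have ht : 0 ≤ b - a := by linarith
  have hΔ : L p b - L p a
      = (Real.log (p - 1 + b) - Real.log (p - 1 + a)) + (b - a) * Real.log (1 - 1 / p) := by
    rw [L, L, log_shift hp ha, log_shift hp (le_trans ha hab)]
    ring
  -- bounds on the log difference
  have hratio : Real.log (p - 1 + b) - Real.log (p - 1 + a)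
      = Real.log ((p - 1 + b) / (p - 1 + a)) := by
    rw [Real.log_div (ne_of_gt hB) (ne_of_gt hA)]
  have hub : Real.log (p - 1 + b) - Real.log (p - 1 + a) ≤ (b - a) / (p - 1 + a) := by
    rw [hratio]
    have := Real.log_le_sub_one_of_pos (show (0:ℝ) < (p - 1 + b) / (p - 1 + a) by positivity)
    have heq : (p - 1 + b) / (p - 1 + a) - 1 = (b - a) / (p - 1 + a) := by
      field_simp
      ring
    linarith [heq ▸ this]
  have hlb : (b - a) / (p - 1 + b) ≤ Real.log (p - 1 + b) - Real.log (p - 1 + a) := by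
    rw [hratio]
    have h0 : (0:ℝ) < (p - 1 + b) / (p - 1 + a) := by positivity
    have := Real.one_sub_inv_le_log_of_pos h0
    have heq : 1 - ((p - 1 + b) / (p - 1 + a))⁻¹ = (b - a) / (p - 1 + b) := by
      rw [inv_div]
      field_simp
      ring
    linarith [heq ▸ this]
  have hy_ub := log_one_sub_inv_ub hp
  have hy_lb := log_one_sub_inv_lb hp
  rw [abs_le]
  constructor
  · -- lower bound : -(b-a)/(p-1)^2 ≤ Δ
    have h1 : (b - a) / p ≤ (b - a) / (p - 1 + b) := by
      apply div_le_div_of_nonneg_left ht hB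
      linarith
    have h2 : (b - a) * (-(1 / (p - 1))) ≤ (b - a) * Real.log (1 - 1 / p) :=
      mul_le_mul_of_nonneg_left hy_lb ht
    have h3 : (b - a) / p + (b - a) * (-(1 / (p - 1))) = -((b - a) / (p * (p - 1))) := by
      field_simp
      ring
    have h4 : (b - a) / (p * (p - 1)) ≤ (b - a) / (p - 1) ^ 2 := by
      apply div_le_div_of_nonneg_left ht (by positivity)
      nlinarith
    rw [hΔ]
    linarith
  · have h1 : (b - a) / (p - 1 + a) ≤ (b - a) / (p - 1) := by
      apply div_le_div_of_nonneg_left ht hp1'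
      linarith
    have h2 : (b - a) * Real.log (1 - 1 / p) ≤ (b - a) * (-(1 / p)) :=
      mul_le_mul_of_nonneg_left hy_ub ht
    have h3 : (b - a) / (p - 1) + (b - a) * (-(1 / p)) = (b - a) / (p * (p - 1)) := by
      field_simp
      ring
    have h4 : (b - a) / (p * (p - 1)) ≤ (b - a) / (p - 1) ^ 2 := by
      apply div_le_div_of_nonneg_left ht (by positivity)
      nlinarith
    rw [hΔ]
    linarith

/-- Key per-prime estimate. -/
lemma key {p a b : ℝ} (hp : 2 ≤ p) (ha : a ∈ Set.Icc (0:ℝ) 1) (hb : b ∈ Set.Icc (0:ℝ) 1) :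
    |L p b - L p a| ≤ |b - a| / (p - 1) ^ 2 := by
  rcases le_total a b with h | h
  · rw [abs_of_nonneg (by linarith : (0:ℝ) ≤ b - a)]
    exact key_le hp ha.1 h hb.2
  · rw [abs_of_nonpos (by linarith : b - a ≤ 0), show -(b - a) = a - b by ring]
    rw [abs_sub_comm]
    exact key_le hp hb.1 h ha.2

/-- Bound on a single log factor. -/
lemma key_zero {p b : ℝ} (hp : 2 ≤ p) (hb : b ∈ Set.Icc (0:ℝ) 1) :
    |L p b| ≤ 1 / (p - 1) ^ 2 := by
  have h0 : L p 0 = 0 := by simp [L]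
  have := key hp (by constructor <;> norm_num : (0:ℝ) ∈ Set.Icc (0:ℝ) 1) hb
  rw [h0, sub_zero, sub_zero] at this
  refine this.trans ?_
  have hp1 : (0:ℝ) < (p - 1) ^ 2 := by nlinarith
  have hb1 : |b| ≤ 1 := by rw [abs_of_nonneg hb.1]; exact hb.2
  gcongr

/-- The dominating sequence. -/
def c (n : ℕ) : ℝ := 1 / ((n : ℝ) - 1) ^ 2

lemma c_nonneg (n : ℕ) : 0 ≤ c n := by unfold c; positivity

lemma summable_c : Summable c := by
  rw [← summable_nat_add_iff 2]
  have h : Summable (fun n : ℕ => 1 / ((n : ℝ) + 1) ^ 2) := by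
    have := (summable_nat_add_iff (f := fun n : ℕ => 1 / (n : ℝ) ^ 2) 1).mpr
      (Real.summable_one_div_nat_pow.mpr one_lt_two)
    simpa using this
  refine h.congr fun n => ?_
  unfold c
  push_cast
  ring_nf

/-- total mass -/
def S : ℝ := ∑' n, c n

lemma S_nonneg : 0 ≤ S := tsum_nonneg c_nonneg

lemma abs_exp_sub_one_le (x : ℝ) : |Real.exp x - 1| ≤ |x| * Real.exp |x| := by
  rcases le_total 0 x with h | h
  · rw [abs_of_nonneg h, abs_of_nonneg (by linarith [Real.one_le_exp h] : (0:ℝ) ≤ Real.exp x - 1)]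
    have h1 : -x + 1 ≤ Real.exp (-x) := Real.add_one_le_exp (-x)
    have h2 : Real.exp (-x) * Real.exp x = 1 := by
      rw [← Real.exp_add]; simp
    nlinarith [Real.exp_pos x]
  · rw [abs_of_nonpos h, abs_of_nonpos (by linarith [Real.exp_le_one_iff.mpr h] : Real.exp x - 1 ≤ 0)]
    have h1 : x + 1 ≤ Real.exp x := Real.add_one_le_exp x
    have h2 : 1 ≤ Real.exp (-x) := Real.one_le_exp (by linarith)
    nlinarith

/-- tprod of positive functions with summable logs equals exp of the sum of logs. -/
lemma tprod_eq_exp {ι : Type*} (f : ι → ℝ) (hf : ∀ i, 0 < f i)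
    (h : Summable fun i => Real.log (f i)) :
    (∏' i, f i) = Real.exp (∑' i, Real.log (f i)) := by
  have := Real.rexp_tsum_eq_tprod hf h
  exact this.symm

end Stmt11Aux

open Stmt11Aux

theorem stmt11 :
    ∃ C > 0, ∀ (n : ℕ) (E : Fin (n + 1) → Set ℕ),
      (∀ j, E j ⊆ {p | p.Prime}) →
      (∀ i j, i ≠ j → Disjoint (E i) (E j)) →
      ∀ u v : Fin (n + 1) → ℝ,
        (∀ j, u j ∈ Set.Ioo (0 : ℝ) (1 / 2)) → (∀ j, v j ∈ Set.Ioo (0 : ℝ) (1 / 2)) →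
        0 < ∑ j, |u j - v j| → (∑ j, |u j - v j|) < 1 →
        |Fprod E v / Fprod E u - 1| ≤ C * ∑ j, |u j - v j| := by
  refine ⟨(S + 1) * Real.exp (S + 1),
    mul_pos (by linarith [S_nonneg]) (Real.exp_pos _), ?_⟩
  intro n E hE _hdisj u v hu hv hδpos hδlt
  set δ := ∑ j, |u j - v j| with hδdef
  -- basic facts about each coordinate
  have huIcc : ∀ j, u j ∈ Set.Icc (0:ℝ) 1 := fun j =>
    ⟨le_of_lt (hu j).1, by linarith [(hu j).2]⟩
  have hvIcc : ∀ j, v j ∈ Set.Icc (0:ℝ) 1 := fun j =>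
    ⟨le_of_lt (hv j).1, by linarith [(hv j).2]⟩
  -- for `p` in `E j`, `2 ≤ (p : ℝ)`
  have hp2 : ∀ (j : Fin (n+1)) (p : E j), (2:ℝ) ≤ ((p : ℕ) : ℝ) := by
    intro j p
    exact_mod_cast (hE j p.2).two_le
  -- summability of `c` on each subtype
  have hcsub : ∀ j : Fin (n+1), Summable (fun p : E j => c (p : ℕ)) := fun j =>
    summable_c.subtype (E j)
  -- summability of logs
  have hLsum : ∀ (j : Fin (n+1)) (r : ℝ), r ∈ Set.Icc (0:ℝ) 1 →
      Summable (fun p : E j => L ((p : ℕ) : ℝ) r) := by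
    intro j r hr
    apply Summable.of_norm_bounded (hcsub j)
    intro p
    have := key_zero (hp2 j p) hr
    simpa [c, Real.norm_eq_abs] using this
  -- positivity of factors
  have hfpos : ∀ (j : Fin (n+1)) (r : ℝ), r ∈ Set.Icc (0:ℝ) 1 → ∀ p : E j,
      0 < (1 + r / (((p : ℕ) : ℝ) - 1)) * (1 - 1 / ((p : ℕ) : ℝ)) ^ r := by
    intro j r hr p
    have h2 := hp2 j p
    have hp1 : (0:ℝ) < ((p : ℕ) : ℝ) - 1 := by linarith
    have hq : (0:ℝ) < 1 - 1 / ((p : ℕ) : ℝ) := by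
      have : 1 / ((p : ℕ) : ℝ) ≤ 1 / 2 := by
        apply one_div_le_one_div_of_le <;> linarith
      linarith
    have h1 : (0:ℝ) < 1 + r / (((p : ℕ) : ℝ) - 1) := by
      have := div_nonneg hr.1 (le_of_lt hp1)
      linarith
    exact mul_pos h1 (Real.rpow_pos_of_pos hq r)
  -- each inner tprod equals exp of the tsum of L
  have htprod : ∀ (j : Fin (n+1)) (r : ℝ), r ∈ Set.Icc (0:ℝ) 1 →
      (∏' p : E j, ((1 + r / (((p : ℕ) : ℝ) - 1)) * (1 - 1 / ((p : ℕ) : ℝ)) ^ r))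
        = Real.exp (∑' p : E j, L ((p : ℕ) : ℝ) r) := by
    intro j r hr
    have hlogeq : (fun p : E j => Real.log
        ((1 + r / (((p : ℕ) : ℝ) - 1)) * (1 - 1 / ((p : ℕ) : ℝ)) ^ r))
        = fun p : E j => L ((p : ℕ) : ℝ) r := by
      funext p
      exact log_factor (hp2 j p) hr.1
    have hsum : Summable fun p : E j => Real.log
        ((1 + r / (((p : ℕ) : ℝ) - 1)) * (1 - 1 / ((p : ℕ) : ℝ)) ^ r) := by
      rw [hlogeq]; exact hLsum j r hr
    rw [tprod_eq_exp _ (hfpos j r hr) hsum, hlogeq]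
  -- F as an exponential
  have hF : ∀ ρ : Fin (n+1) → ℝ, (∀ j, ρ j ∈ Set.Icc (0:ℝ) 1) →
      Fprod E ρ = Real.exp (∑ j, ∑' p : E j, L ((p : ℕ) : ℝ) (ρ j)) := by
    intro ρ hρ
    rw [Fprod, Real.exp_sum]
    exact Finset.prod_congr rfl fun j _ => htprod j (ρ j) (hρ j)
  have hFu := hF u huIcc
  have hFv := hF v hvIcc
  set Tu : Fin (n+1) → ℝ := fun j => ∑' p : E j, L ((p : ℕ) : ℝ) (u j) with hTu
  set Tv : Fin (n+1) → ℝ := fun j => ∑' p : E j, L ((p : ℕ) : ℝ) (v j) with hTv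
  set X : ℝ := ∑ j, Tv j - ∑ j, Tu j with hX
  have hratio : Fprod E v / Fprod E u = Real.exp X := by
    rw [hFu, hFv, ← Real.exp_sub]
  -- bound each coordinate difference
  have hbound : ∀ j : Fin (n+1), |Tv j - Tu j| ≤ |u j - v j| * S := by
    intro j
    have hsv := hLsum j (v j) (hvIcc j)
    have hsu := hLsum j (u j) (huIcc j)
    have hdiff : Tv j - Tu j
        = ∑' p : E j, (L ((p : ℕ) : ℝ) (v j) - L ((p : ℕ) : ℝ) (u j)) :=
      (Summable.tsum_sub hsv hsu).symm
    rw [hdiff]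
    have hterm : ∀ p : E j,
        |L ((p : ℕ) : ℝ) (v j) - L ((p : ℕ) : ℝ) (u j)| ≤ |u j - v j| * c (p : ℕ) := by
      intro p
      have := key (hp2 j p) (huIcc j) (hvIcc j)
      calc |L ((p : ℕ) : ℝ) (v j) - L ((p : ℕ) : ℝ) (u j)|
          ≤ |v j - u j| / (((p : ℕ) : ℝ) - 1) ^ 2 := this
        _ = |u j - v j| * c (p : ℕ) := by
            rw [abs_sub_comm, c]; ring
    have hgsum : Summable (fun p : E j => |u j - v j| * c (p : ℕ)) :=
      (hcsub j).mul_left _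
    have h1 : ‖∑' p : E j, (L ((p : ℕ) : ℝ) (v j) - L ((p : ℕ) : ℝ) (u j))‖
        ≤ ∑' p : E j, |u j - v j| * c (p : ℕ) :=
      tsum_of_norm_bounded hgsum.hasSum
        (fun p => by simpa [Real.norm_eq_abs] using hterm p)
    rw [Real.norm_eq_abs] at h1
    refine h1.trans ?_
    rw [tsum_mul_left]
    apply mul_le_mul_of_nonneg_left _ (abs_nonneg _)
    exact Summable.tsum_subtype_le c (E j) c_nonneg summable_c
  -- bound X
  have hXb : |X| ≤ S * δ := by
    rw [hX, ← Finset.sum_sub_distrib]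
    calc |∑ j, (Tv j - Tu j)| ≤ ∑ j, |Tv j - Tu j| := Finset.abs_sum_le_sum_abs _ _
      _ ≤ ∑ j, |u j - v j| * S := Finset.sum_le_sum fun j _ => hbound j
      _ = S * δ := by rw [← Finset.sum_mul, hδdef]; ring
  have hδ1 : δ ≤ 1 := le_of_lt hδlt
  have hδ0 : 0 ≤ δ := le_of_lt hδpos
  have hXS : |X| ≤ S + 1 := hXb.trans (by nlinarith [S_nonneg])
  -- conclude
  rw [hratio]
  calc |Real.exp X - 1| ≤ |X| * Real.exp |X| := abs_exp_sub_one_le X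
    _ ≤ (S * δ) * Real.exp (S + 1) := by
        apply mul_le_mul hXb (Real.exp_le_exp.mpr hXS) (le_of_lt (Real.exp_pos _))
        nlinarith [S_nonneg]
    _ ≤ (S + 1) * Real.exp (S + 1) * δ := by
        nlinarith [Real.exp_pos (S + 1), S_nonneg]
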